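/- For any positive integers k and r, ζ(k+1, 1,...,1) (with r-1 trailing ones) = ζ(r+1, 1,...,1) (with k-1 trailing ones). -/

import Mathlib

open scoped ENNReal
open Filter

/-- The multiple zeta value `ζ(k₁,…,k_d) = ∑_{n₁>⋯>n_d≥1} 1/(n₁^{k₁}⋯n_d^{k_d})`. -/
noncomputable def mzv (k : List ℕ) : ℝ :=
  ∑' n : {f : Fin k.length → ℕ // (∀ i j : Fin k.length, i < j → f j < f i) ∧ ∀ i, 1 ≤ f i},
    ∏ i : Fin k.length, (1 : ℝ) / (n.1 i : ℝ) ^ (k.get i)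

namespace MzvDual


noncomputable def Ffun (a b : ℕ) : ℝ≥0∞ :=
  (((a-1).factorial * (b-1).factorial : ℕ) : ℝ≥0∞) / (((a+b).factorial : ℕ) : ℝ≥0∞)

noncomputable def Gfun (a c : ℕ) : ℝ≥0∞ :=
  (((a-1).factorial * c.factorial : ℕ) : ℝ≥0∞) / (((a+c).factorial : ℕ) : ℝ≥0∞)

lemma Ffun_symm (a b : ℕ) : Ffun a b = Ffun b a := by
  unfold Ffun; rw [Nat.mul_comm, Nat.add_comm]

lemma Gfun_eq (a m : ℕ) (hm : 1 ≤ m) : Gfun a m = (m : ℝ≥0∞) * Ffun a m := by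
  unfold Gfun Ffun
  rw [← mul_div_assoc]
  congr 1
  have hmf : m.factorial = m * (m-1).factorial := by
    obtain ⟨n, rfl⟩ := Nat.exists_eq_succ_of_ne_zero (by omega : m ≠ 0)
    simp [Nat.factorial_succ]
  rw [hmf]
  push_cast
  ring

-- real versions
lemma L1 (a c : ℕ) (ha : 1 ≤ a) :
    ∑' i : ℕ, Ffun a (c+1+i) = Gfun a c / (a : ℝ≥0∞) := by
  -- real-valued telescoping
  set u : ℕ → ℝ := fun i => ((a-1).factorial * (c+i).factorial : ℝ) / ((a+c+i).factorial : ℝ) with hu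
  set fr : ℕ → ℝ := fun i => ((a-1).factorial * (c+i).factorial : ℝ) / ((a+c+1+i).factorial : ℝ) with hfr
  have hfact_pos : ∀ n : ℕ, (0:ℝ) < (n.factorial : ℝ) := fun n => by
    exact_mod_cast n.factorial_pos
  have hfr_nonneg : ∀ i, 0 ≤ fr i := fun i => by
    apply div_nonneg <;> positivity
  have htel : ∀ i, u i - u (i+1) = (a : ℝ) * fr i := by
    intro i
    have h1 : (a+c+i+1).factorial = (a+c+i+1) * (a+c+i).factorial := Nat.factorial_succ _
    have h2 : (c+i+1).factorial = (c+i+1) * (c+i).factorial := Nat.factorial_succ _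
    have h3 : a+c+1+i = a+c+i+1 := by ring
    simp only [hu, hfr, show a+c+(i+1)=a+c+i+1 from by ring,
      show c+(i+1)=c+i+1 from by ring, h3, h1, h2]
    have A := hfact_pos (a+c+i)
    have B := hfact_pos (c+i)
    push_cast
    field_simp
    ring
  have hu_nonneg : ∀ i, 0 ≤ u i := fun i => by
    apply div_nonneg <;> positivity
  have hu_le : ∀ i, u i ≤ ((a-1).factorial : ℝ) / (i+1) := by
    intro i
    have hle : (i+1) * (c+i).factorial ≤ (a+c+i).factorial := by
      calc (i+1) * (c+i).factorial ≤ (c+i+1) * (c+i).factorial := by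
            apply Nat.mul_le_mul_right; omega
        _ = (c+i+1).factorial := (Nat.factorial_succ _).symm
        _ ≤ (a+c+i).factorial := Nat.factorial_le (by omega)
    rw [hu, div_le_div_iff₀ (by positivity) (by positivity)]
    calc ((a-1).factorial * (c+i).factorial : ℝ) * (i+1)
        = ((a-1).factorial : ℝ) * ((i+1) * (c+i).factorial) := by ring
      _ ≤ ((a-1).factorial : ℝ) * ((a+c+i).factorial) := by
          apply mul_le_mul_of_nonneg_left _ (by positivity)
          exact_mod_cast hle
  have hu_tendsto : Tendsto u atTop (nhds 0) := by
    apply squeeze_zero hu_nonneg hu_le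
    have h := (tendsto_const_div_atTop_nhds_zero_nat ((a-1).factorial : ℝ)).comp
      (tendsto_add_atTop_nat 1)
    simpa [Function.comp_def] using h
  have hsum : HasSum (fun i => (a:ℝ) * fr i) (u 0) := by
    rw [hasSum_iff_tendsto_nat_of_nonneg (fun i => by
      have := hfr_nonneg i; positivity)]
    have hps : ∀ n, ∑ i ∈ Finset.range n, (a:ℝ) * fr i = u 0 - u n := by
      intro n
      rw [← Finset.sum_range_sub' u n]
      exact Finset.sum_congr rfl fun i _ => (htel i).symm
    simp only [hps]
    simpa using tendsto_const_nhds.sub hu_tendsto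
  have ha' : (a:ℝ) ≠ 0 := by positivity
  have hsum' : HasSum fr (u 0 / a) := by
    simpa [mul_div_assoc, mul_div_cancel_left₀ _ ha'] using hsum.div_const (a:ℝ)
  -- convert to ENNReal
  have hterm : ∀ i, Ffun a (c+1+i) = ENNReal.ofReal (fr i) := by
    intro i
    unfold Ffun
    rw [ENNReal.ofReal_div_of_pos (hfact_pos _)]
    have h1 : c+1+i-1 = c+i := by omega
    have h2 : a+(c+1+i) = a+c+1+i := by ring
    rw [h1, h2]
    congr 1
    · rw [← ENNReal.ofReal_natCast]; push_cast; ring_nf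
    · rw [← ENNReal.ofReal_natCast]
  have hG : Gfun a c / (a:ℝ≥0∞) = ENNReal.ofReal (u 0 / a) := by
    unfold Gfun
    rw [ENNReal.ofReal_div_of_pos (by positivity), ENNReal.ofReal_div_of_pos (hfact_pos _)]
    simp only [hu, add_zero]
    congr 1
    · congr 1
      · rw [← ENNReal.ofReal_natCast]; push_cast; ring_nf
      · rw [← ENNReal.ofReal_natCast]
    · rw [← ENNReal.ofReal_natCast]
  rw [hG, ← hsum'.tsum_eq, ENNReal.ofReal_tsum_of_nonneg hfr_nonneg hsum'.summable]
  exact tsum_congr hterm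


noncomputable def It (φ : ℕ → ℝ≥0∞) : ℕ → ℕ → ℝ≥0∞
  | 0, c => φ c
  | (t+1), c => ∑' i : ℕ, (((c+1+i : ℕ) : ℝ≥0∞))⁻¹ * It φ t (c+1+i)

lemma It_congr {φ φ' : ℕ → ℝ≥0∞} :
    ∀ t c, (∀ d, c < d → φ d = φ' d) → It φ (t+1) c = It φ' (t+1) c := by
  intro t
  induction t with
  | zero =>
    intro c h
    simp only [It]
    exact tsum_congr fun i => by rw [h _ (by omega)]
  | succ t ih =>
    intro c h
    show (∑' i : ℕ, _) = (∑' i : ℕ, _)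
    exact tsum_congr fun i => by
      rw [ih (c+1+i) (fun d hd => h d (by omega))]

lemma It_mul (φ : ℕ → ℝ≥0∞) (x : ℝ≥0∞) :
    ∀ t c, It (fun d => x * φ d) t c = x * It φ t c := by
  intro t
  induction t with
  | zero => intro c; rfl
  | succ t ih =>
    intro c
    show (∑' i : ℕ, _) = x * (∑' i : ℕ, _)
    rw [← ENNReal.tsum_mul_left]
    exact tsum_congr fun i => by rw [ih]; ring

lemma It_tsum (g : ℕ → ℕ → ℝ≥0∞) :
    ∀ t c, It (fun d => ∑' j : ℕ, g j d) t c = ∑' j : ℕ, It (g j) t c := by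
  intro t
  induction t with
  | zero => intro c; rfl
  | succ t ih =>
    intro c
    show (∑' i : ℕ, _) = _
    calc (∑' i : ℕ, (((c+1+i : ℕ) : ℝ≥0∞))⁻¹ * It (fun d => ∑' j : ℕ, g j d) t (c+1+i))
        = ∑' (i : ℕ) (j : ℕ), (((c+1+i : ℕ) : ℝ≥0∞))⁻¹ * It (g j) t (c+1+i) := by
          exact tsum_congr fun i => by rw [ih, ENNReal.tsum_mul_left]
      _ = ∑' (j : ℕ) (i : ℕ), (((c+1+i : ℕ) : ℝ≥0∞))⁻¹ * It (g j) t (c+1+i) :=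
          ENNReal.tsum_comm
      _ = ∑' j : ℕ, It (g j) (t+1) c := rfl

lemma It_swap (ψ : ℕ → ℕ → ℝ≥0∞) :
    ∀ k r b c, It (fun a => It (ψ a) r c) k b = It (fun d => It (fun a => ψ a d) k b) r c := by
  intro k
  induction k with
  | zero => intro r b c; rfl
  | succ k ih =>
    intro r b c
    show (∑' i : ℕ, _) = _
    calc (∑' i : ℕ, (((b+1+i : ℕ) : ℝ≥0∞))⁻¹ * It (fun a => It (ψ a) r c) k (b+1+i))
        = ∑' i : ℕ, It (fun d => (((b+1+i : ℕ) : ℝ≥0∞))⁻¹ * It (fun a => ψ a d) k (b+1+i)) r c := by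
          exact tsum_congr fun i => by rw [ih, It_mul]
      _ = It (fun d => ∑' i : ℕ, (((b+1+i : ℕ) : ℝ≥0∞))⁻¹ * It (fun a => ψ a d) k (b+1+i)) r c :=
          (It_tsum _ r c).symm
      _ = _ := rfl


lemma It_Gfun (a : ℕ) (ha : 1 ≤ a) :
    ∀ j c, It (Gfun a) j c = Gfun a c / ((a : ℝ≥0∞))^j := by
  intro j
  induction j with
  | zero => intro c; simp [It]
  | succ j ih =>
    intro c
    have hstep : ∀ m : ℕ, 1 ≤ m → ((m : ℝ≥0∞))⁻¹ * Gfun a m = Ffun a m := by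
      intro m hm
      rw [Gfun_eq a m hm, ← mul_assoc, ENNReal.inv_mul_cancel (by exact_mod_cast (Nat.cast_pos.mpr hm).ne' : (m:ℝ≥0∞) ≠ 0) (by simp), one_mul]
    calc It (Gfun a) (j+1) c
        = ∑' i : ℕ, (((c+1+i : ℕ) : ℝ≥0∞))⁻¹ * (Gfun a (c+1+i) / ((a:ℝ≥0∞))^j) := by
          show (∑' i : ℕ, _) = _
          exact tsum_congr fun i => by rw [ih]
      _ = ∑' i : ℕ, Ffun a (c+1+i) * (((a:ℝ≥0∞))^j)⁻¹ := by
          refine tsum_congr fun i => ?_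
          rw [div_eq_mul_inv, ← mul_assoc, hstep _ (by omega)]
      _ = (Gfun a c / (a : ℝ≥0∞)) * (((a:ℝ≥0∞))^j)⁻¹ := by
          rw [ENNReal.tsum_mul_right, L1 a c ha]
      _ = Gfun a c / ((a : ℝ≥0∞))^(j+1) := by
          rw [div_eq_mul_inv, div_eq_mul_inv, mul_assoc, ← ENNReal.mul_inv (by simp) (by simp), pow_succ, mul_comm ((a:ℝ≥0∞)) _]


def Cc (t c : ℕ) : Type :=
  {f : Fin t → ℕ // (∀ i j : Fin t, i < j → f j < f i) ∧ ∀ i, c < f i}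

instance (c : ℕ) : Unique (Cc 0 c) where
  default := ⟨Fin.elim0, fun i => i.elim0, fun i => i.elim0⟩
  uniq := fun a => Subtype.ext (funext fun i => i.elim0)

def peel (t c : ℕ) : Cc (t+1) c ≃ Σ i : ℕ, Cc t (c+1+i) where
  toFun f := ⟨f.1 (Fin.last t) - (c+1),
    ⟨fun i => f.1 i.castSucc,
     ⟨fun i j hij => f.2.1 _ _ (Fin.castSucc_lt_castSucc_iff.mpr hij),
      fun i => by
        show c + 1 + (f.1 (Fin.last t) - (c+1)) < f.1 i.castSucc
        have h1 : f.1 (Fin.last t) < f.1 i.castSucc := f.2.1 _ _ (Fin.castSucc_lt_last i)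
        have h2 : c < f.1 (Fin.last t) := f.2.2 _
        omega⟩⟩⟩
  invFun p := ⟨Fin.snoc p.2.1 (c+1+p.1), by
    obtain ⟨i, g, hg⟩ := p
    dsimp only
    constructor
    · intro a b hab
      rcases Fin.eq_castSucc_or_eq_last b with ⟨b', rfl⟩ | rfl
      · rcases Fin.eq_castSucc_or_eq_last a with ⟨a', rfl⟩ | rfl
        · rw [Fin.snoc_castSucc, Fin.snoc_castSucc]
          exact hg.1 _ _ (Fin.castSucc_lt_castSucc_iff.mp hab)
        · exact absurd hab (Fin.castSucc_lt_last b').asymm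
      · rw [Fin.snoc_last]
        rcases Fin.eq_castSucc_or_eq_last a with ⟨a', rfl⟩ | rfl
        · rw [Fin.snoc_castSucc]; exact hg.2 a'
        · exact absurd hab (lt_irrefl _)
    · intro a
      rcases Fin.eq_castSucc_or_eq_last a with ⟨a', rfl⟩ | rfl
      · rw [Fin.snoc_castSucc]
        have := hg.2 a'
        omega
      · rw [Fin.snoc_last]; omega⟩
  left_inv f := by
    have hlast : c + 1 + (f.1 (Fin.last t) - (c+1)) = f.1 (Fin.last t) := by
      have := f.2.2 (Fin.last t); omega
    apply Subtype.ext
    refine funext fun a => ?_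
    dsimp only
    refine Fin.lastCases ?_ ?_ a
    · rw [Fin.snoc_last, hlast]
    · intro a'; rw [Fin.snoc_castSucc]
  right_inv p := by
    obtain ⟨i, g, hg⟩ := p
    have h1 : (Fin.snoc g (c+1+i) : Fin (t+1) → ℕ) (Fin.last t) - (c+1) = i := by
      rw [Fin.snoc_last]; omega
    refine Sigma.ext h1 ?_
    dsimp only
    unfold Cc
    rw [Subtype.heq_iff_coe_eq (by rw [h1]; exact fun x => Iff.rfl)]
    show (fun a : Fin t => (Fin.snoc g (c+1+i) : Fin (t+1) → ℕ) a.castSucc) = g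
    exact funext fun a => Fin.snoc_castSucc _ _ a

lemma tsum_unique {α : Type*} [Unique α] (f : α → ℝ≥0∞) : ∑' a, f a = f default :=
  tsum_eq_single default (fun b hb => absurd (Subsingleton.elim b default) hb)



lemma chain_eq (Θ : ℕ → ℝ≥0∞) :
    ∀ t c, (∑' n : Cc (t+1) c, Θ (n.1 0) * ∏ i : Fin t, ((n.1 i.succ : ℕ) : ℝ≥0∞)⁻¹)
      = It (fun m => (m : ℝ≥0∞) * Θ m) (t+1) c := by
  intro t
  induction t with
  | zero =>
    intro c
    rw [← Equiv.tsum_eq ((peel 0 c).symm)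
      (fun n => Θ (n.1 0) * ∏ i : Fin 0, ((n.1 i.succ : ℕ) : ℝ≥0∞)⁻¹),
      ENNReal.tsum_sigma']
    show (∑' (i : ℕ) (g : Cc 0 (c+1+i)),
        Θ ((Fin.snoc g.1 (c+1+i) : Fin 1 → ℕ) 0) * ∏ j : Fin 0, _) = ∑' i : ℕ, _
    refine tsum_congr fun i => ?_
    rw [tsum_unique]
    show Θ ((Fin.snoc _ (c+1+i) : Fin 1 → ℕ) 0) * (∏ j : Fin 0, ((Fin.elim0 j : ℕ) : ℝ≥0∞)⁻¹)
        = (((c+1+i : ℕ) : ℝ≥0∞))⁻¹ * (It (fun m => (m : ℝ≥0∞) * Θ m) 0 (c+1+i))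
    rw [show ((0 : Fin 1)) = Fin.last 0 from rfl, Fin.snoc_last, Finset.univ_eq_empty,
      Finset.prod_empty, mul_one]
    show Θ (c+1+i) = _ * ((((c+1+i : ℕ)) : ℝ≥0∞) * Θ (c+1+i))
    rw [← mul_assoc, ENNReal.inv_mul_cancel (by exact_mod_cast (by omega : c+1+i ≠ 0))
      (by simp), one_mul]
  | succ t ih =>
    intro c
    rw [← Equiv.tsum_eq ((peel (t+1) c).symm)
      (fun n => Θ (n.1 0) * ∏ i : Fin (t+1), ((n.1 i.succ : ℕ) : ℝ≥0∞)⁻¹),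
      ENNReal.tsum_sigma']
    show (∑' (i : ℕ) (g : Cc (t+1) (c+1+i)),
        Θ ((Fin.snoc g.1 (c+1+i) : Fin (t+2) → ℕ) 0) *
          ∏ j : Fin (t+1), (((Fin.snoc g.1 (c+1+i) : Fin (t+2) → ℕ) j.succ : ℕ) : ℝ≥0∞)⁻¹)
      = ∑' i : ℕ, (((c+1+i : ℕ) : ℝ≥0∞))⁻¹ * It (fun m => (m : ℝ≥0∞) * Θ m) (t+1) (c+1+i)
    refine tsum_congr fun i => ?_
    have hterm : ∀ g : Cc (t+1) (c+1+i),
        Θ ((Fin.snoc g.1 (c+1+i) : Fin (t+2) → ℕ) 0) *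
          ∏ j : Fin (t+1), (((Fin.snoc g.1 (c+1+i) : Fin (t+2) → ℕ) j.succ : ℕ) : ℝ≥0∞)⁻¹
        = (Θ (g.1 0) * ∏ j : Fin t, ((g.1 j.succ : ℕ) : ℝ≥0∞)⁻¹) * (((c+1+i : ℕ) : ℝ≥0∞))⁻¹ := by
      intro g
      have h0 : (Fin.snoc g.1 (c+1+i) : Fin (t+2) → ℕ) 0 = g.1 0 := by
        rw [← Fin.castSucc_zero, Fin.snoc_castSucc]
      have hprod : (∏ j : Fin (t+1), (((Fin.snoc g.1 (c+1+i) : Fin (t+2) → ℕ) j.succ : ℕ) : ℝ≥0∞)⁻¹)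
          = (∏ j : Fin t, ((g.1 j.succ : ℕ) : ℝ≥0∞)⁻¹) * (((c+1+i : ℕ) : ℝ≥0∞))⁻¹ := by
        rw [Fin.prod_univ_castSucc]
        congr 1
        · refine Finset.prod_congr rfl fun j _ => ?_
          rw [Fin.succ_castSucc, Fin.snoc_castSucc]
        · rw [Fin.succ_last, Fin.snoc_last]
      rw [h0, hprod, mul_assoc]
    rw [tsum_congr hterm, ENNReal.tsum_mul_right, ih (c+1+i), mul_comm]


noncomputable def zz (d : ℕ) (k : Fin d → ℕ) : ℝ≥0∞ :=
  ∑' n : Cc d 0, ∏ i : Fin d, (((n.1 i : ℕ) : ℝ≥0∞) ^ (k i))⁻¹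

lemma zz_cast {d d' : ℕ} (h : d = d') (k : Fin d → ℕ) :
    zz d k = zz d' (fun i => k (Fin.cast h.symm i)) := by subst h; rfl

lemma mzv_zz (L : List ℕ) : mzv L = (zz L.length (fun i => L.get i)).toReal := by
  unfold mzv zz
  have hne : ∀ (n : Cc L.length 0) (i : Fin L.length),
      (((n.1 i : ℕ) : ℝ≥0∞) ^ (L.get i))⁻¹ ≠ ∞ := by
    intro n i
    refine ENNReal.inv_ne_top.mpr (pow_ne_zero _ ?_)
    exact_mod_cast (n.2.2 i).ne'
  rw [ENNReal.tsum_toReal_eq (fun n => ENNReal.prod_ne_top (fun i _ => hne n i))]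
  refine tsum_congr fun n => ?_
  rw [ENNReal.toReal_prod]
  refine Finset.prod_congr rfl fun i _ => ?_
  rw [ENNReal.toReal_inv, ENNReal.toReal_pow, ENNReal.toReal_natCast, one_div]



lemma zz_shape (s t : ℕ) :
    zz (s :: List.replicate t 1).length (fun i => (s :: List.replicate t 1).get i)
      = It (fun m => (m:ℝ≥0∞) * ((((m:ℕ):ℝ≥0∞))^s)⁻¹) (t+1) 0 := by
  have h : (s :: List.replicate t 1).length = t+1 := by simp
  rw [zz_cast h]
  have hk : ∀ i : Fin (t+1),
      (s :: List.replicate t 1).get (Fin.cast h.symm i) = Fin.cases s (fun _ => 1) i := by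
    intro i
    refine Fin.cases ?_ ?_ i
    · rfl
    · intro j
      simp only [Fin.cases_succ]
      show (s :: List.replicate t 1).get ⟨j.val+1, _⟩ = 1
      show (List.replicate t 1).get ⟨j.val, _⟩ = 1
      simp
  rw [← chain_eq (fun m => ((((m:ℕ):ℝ≥0∞))^s)⁻¹) t 0]
  unfold zz
  refine tsum_congr fun n => ?_
  rw [Fin.prod_univ_succ]
  simp only [hk, Fin.cases_zero, Fin.cases_succ, pow_one]



lemma key_eval (k m : ℕ) (hk : 1 ≤ k) (hm : 1 ≤ m) :
    It (fun d => (m:ℝ≥0∞) * ((d:ℝ≥0∞) * Ffun m d)) k 0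
      = (m:ℝ≥0∞) * (((m:ℝ≥0∞))^(k+1))⁻¹ := by
  have hm0 : (m:ℝ≥0∞) ≠ 0 := by exact_mod_cast (by omega : m ≠ 0)
  have hmt : (m:ℝ≥0∞) ≠ ∞ := by simp
  rw [It_mul (fun d => (d:ℝ≥0∞) * Ffun m d) (m:ℝ≥0∞) k 0]
  congr 1
  obtain ⟨k₀, rfl⟩ := Nat.exists_eq_add_of_le hk
  have h1 : It (fun d => (d:ℝ≥0∞) * Ffun m d) (1+k₀) 0 = It (Gfun m) (1+k₀) 0 := by
    rw [show 1+k₀ = k₀+1 from by omega]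
    exact It_congr k₀ 0 (fun d hd => (Gfun_eq m d (by omega)).symm)
  rw [h1, It_Gfun m hm]
  have hfne : (((m-1).factorial : ℕ) : ℝ≥0∞) ≠ 0 ∧ (((m-1).factorial : ℕ) : ℝ≥0∞) ≠ ∞ := by
    constructor
    · exact_mod_cast (m-1).factorial_pos.ne'
    · simp
  have hG0 : Gfun m 0 = ((m:ℝ≥0∞))⁻¹ := by
    unfold Gfun
    rw [Nat.add_zero, Nat.factorial_zero, Nat.mul_one]
    have hmf : m.factorial = m * (m-1).factorial := by
      obtain ⟨n, rfl⟩ := Nat.exists_eq_succ_of_ne_zero (by omega : m ≠ 0)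
      simp [Nat.factorial_succ]
    have hcast : ((m.factorial : ℕ) : ℝ≥0∞) = (m:ℝ≥0∞) * (((m-1).factorial : ℕ) : ℝ≥0∞) := by
      rw [hmf]; push_cast; ring
    rw [hcast, eq_comm, ENNReal.eq_div_iff (by exact mul_ne_zero hm0 hfne.1)
      (by exact ENNReal.mul_ne_top hmt hfne.2)]
    rw [mul_comm, ← mul_assoc, ENNReal.inv_mul_cancel hm0 hmt, one_mul]
  rw [hG0, div_eq_mul_inv, ← ENNReal.mul_inv (Or.inl hm0) (Or.inl hmt), ← pow_succ']

lemma main_duality (k r : ℕ) (hk : 1 ≤ k) (hr : 1 ≤ r) :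
    It (fun m => (m:ℝ≥0∞) * ((((m:ℕ):ℝ≥0∞))^(k+1))⁻¹) r 0
      = It (fun m => (m:ℝ≥0∞) * ((((m:ℕ):ℝ≥0∞))^(r+1))⁻¹) k 0 := by
  obtain ⟨r₀, hr₀⟩ := Nat.exists_eq_add_of_le hr
  obtain ⟨k₀, hk₀⟩ := Nat.exists_eq_add_of_le hk
  have hstep1 : It (fun m => (m:ℝ≥0∞) * ((((m:ℕ):ℝ≥0∞))^(k+1))⁻¹) r 0
      = It (fun m => It (fun d => (m:ℝ≥0∞) * ((d:ℝ≥0∞) * Ffun m d)) k 0) r 0 := by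
    rw [show r = r₀+1 from by omega]
    exact (It_congr r₀ 0 (fun m hm => (key_eval k m hk (by omega)))).symm
  have hstep2 : It (fun m => (m:ℝ≥0∞) * ((((m:ℕ):ℝ≥0∞))^(r+1))⁻¹) k 0
      = It (fun d => It (fun m => (d:ℝ≥0∞) * ((m:ℝ≥0∞) * Ffun d m)) r 0) k 0 := by
    rw [show k = k₀+1 from by omega]
    exact (It_congr k₀ 0 (fun d hd => (key_eval r d hr (by omega)))).symm
  rw [hstep1, hstep2, It_swap (fun m d => (m:ℝ≥0∞) * ((d:ℝ≥0∞) * Ffun m d)) r k 0 0]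
  congr 1
  funext d
  congr 1
  funext m
  rw [Ffun_symm m d]
  ring

end MzvDual

/-- Height-one duality: `ζ(k+1,1,…,1) = ζ(r+1,1,…,1)` (with `r-1`, resp. `k-1`, ones). -/
theorem stmt_3 (k r : ℕ) (hk : 1 ≤ k) (hr : 1 ≤ r) :
    mzv ((k + 1) :: List.replicate (r - 1) 1) = mzv ((r + 1) :: List.replicate (k - 1) 1) := by
  rw [MzvDual.mzv_zz, MzvDual.mzv_zz, MzvDual.zz_shape (k+1) (r-1), MzvDual.zz_shape (r+1) (k-1),
    show r - 1 + 1 = r from by omega, show k - 1 + 1 = k from by omega]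
  exact congrArg ENNReal.toReal (MzvDual.main_duality k r hk hr)
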